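/- Lemma 6 (value form): the minimum of cost(π') over feasible allocations π' of P' with Z(π') = Z'_max equals the minimum of cost(π) over feasible allocations π of P with Z(π) = Z_max whose sorted vector equals φ_f; i.e., the optimal cost of the dummy-augmented minimum-cost maximum-flow problem P' equals the optimal cost of the original problem P restricted to max-lexmin fair maximum allocations. -/

import Mathlib

/-- A feasible allocation: every assigned triple was bid on, every job is
assigned at most once, and capacities are respected. -/
def Feasible {J T K : Type*} [DecidableEq J] [DecidableEq T] [DecidableEq K]
    (b : J → T → K → Prop) (n : K → T → ℕ) (π : Finset (J × T × K)) : Prop :=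
  (∀ x ∈ π, b x.1 x.2.1 x.2.2) ∧
  (∀ j : J, (π.filter (fun x => x.1 = j)).card ≤ 1) ∧
  (∀ (k : K) (t : T), (π.filter (fun x => x.2.1 = t ∧ x.2.2 = k)).card ≤ n k t)

/-- Number of jobs a company `k` receives in allocation `π`. -/
def alloc {J T K : Type*} [DecidableEq K]
    (π : Finset (J × T × K)) (k : K) : ℕ :=
  (π.filter (fun x => x.2.2 = k)).card

/-- Total compensation of an allocation. -/
def cost {J T K : Type*} (c : J → T → K → ℕ) (π : Finset (J × T × K)) : ℕ :=
  ∑ x ∈ π, c x.1 x.2.1 x.2.2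

/-- The maximum number of allocatable jobs. -/
noncomputable def Zmax {J T K : Type*} [DecidableEq J] [DecidableEq T] [DecidableEq K]
    (b : J → T → K → Prop) (n : K → T → ℕ) : ℕ :=
  sSup {z | ∃ π : Finset (J × T × K), Feasible b n π ∧ π.card = z}

/-- The allocation vector of `π` sorted in nondecreasing order. -/
def sortedVec {J T K : Type*} [Fintype K] [DecidableEq K]
    (π : Finset (J × T × K)) : List ℕ :=
  Multiset.sort (Finset.univ.val.map (fun k => alloc π k)) (· ≤ ·)

/-- `π` is a max-lexmin fair maximum allocation. -/
noncomputable def MaxLexminFair {J T K : Type*} [Fintype K]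
    [DecidableEq J] [DecidableEq T] [DecidableEq K]
    (b : J → T → K → Prop) (n : K → T → ℕ) (π : Finset (J × T × K)) : Prop :=
  Feasible b n π ∧ π.card = Zmax b n ∧
    ∀ π' : Finset (J × T × K), Feasible b n π' → π'.card = Zmax b n →
      sortedVec π' = sortedVec π ∨ List.Lex (· < ·) (sortedVec π') (sortedVec π)


/-! ## The dummy-augmented instance `P'` of Section 3.2.

Given the max-lexmin fair sorted vector `φf = (φ_1 ≤ … ≤ φ_|K|)` of `P`,
we add `L = φ_|K| - φ_1` dummy layers; layer `l` (`0`-indexed) carries one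
dummy time and `#{i : φ_i < φ_1 + l + 1}` dummy jobs of cost `0` that every
company bids on with capacity `1` per dummy time.  In `P'` each company may
receive at most `φ_|K|` jobs in total. -/

/-- Number `L` of dummy layers: largest minus smallest entry of `φf`. -/
def Ldim (φf : List ℕ) : ℕ := φf.getLast! - φf.head!

/-- Number of dummy jobs in (0-indexed) layer `l`: the number of entries of
`φf` smaller than `φ_1 + (l + 1)`. -/
def layerSize (φf : List ℕ) (l : ℕ) : ℕ :=
  (φf.filter (fun x => x < φf.head! + l + 1)).length

/-- The finite type of dummy jobs: layer `l` carries `layerSize φf l` jobs. -/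
abbrev Dummy (φf : List ℕ) : Type := (l : Fin (Ldim φf)) × Fin (layerSize φf l)

/-- Bids of `P'`: the original bids on real jobs at real times, plus a bid of
every company on every dummy job of layer `l` at the dummy time of layer `l`. -/
def bidAug {J T K : Type*} (b : J → T → K → Prop) (φf : List ℕ) :
    (J ⊕ Dummy φf) → (T ⊕ Fin (Ldim φf)) → K → Prop
  | Sum.inl j, Sum.inl t, k => b j t k
  | Sum.inr d, Sum.inr l, _ => d.1 = l
  | _, _, _ => False

/-- Costs of `P'`: original costs on real triples, `0` on dummy triples. -/
def costAug {J T K : Type*} (c : J → T → K → ℕ) (φf : List ℕ) :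
    (J ⊕ Dummy φf) → (T ⊕ Fin (Ldim φf)) → K → ℕ
  | Sum.inl j, Sum.inl t, k => c j t k
  | _, _, _ => 0

/-- Capacities of `P'`: original capacities at real times, capacity `1` for
every company at every dummy time. -/
def capAug {T K : Type*} (n : K → T → ℕ) (φf : List ℕ) :
    K → (T ⊕ Fin (Ldim φf)) → ℕ :=
  fun k t => match t with
  | Sum.inl t => n k t
  | Sum.inr _ => 1

/-- Feasibility for `P'`: feasibility for the augmented bids and capacities,
together with the requirement that each company receives at most `φ_|K|`
(the largest entry of `φf`) jobs in total. -/
def FeasibleAug {J T K : Type*} [DecidableEq J] [DecidableEq T] [DecidableEq K]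
    (b : J → T → K → Prop) (n : K → T → ℕ) (φf : List ℕ)
    (π' : Finset ((J ⊕ Dummy φf) × (T ⊕ Fin (Ldim φf)) × K)) : Prop :=
  Feasible (bidAug b φf) (capAug n φf) π' ∧ ∀ k : K, alloc π' k ≤ φf.getLast!

/-- The maximum number of allocatable jobs in `P'`. -/
noncomputable def ZmaxAug {J T K : Type*} [DecidableEq J] [DecidableEq T] [DecidableEq K]
    (b : J → T → K → Prop) (n : K → T → ℕ) (φf : List ℕ) : ℕ :=
  sSup {z | ∃ π' : Finset ((J ⊕ Dummy φf) × (T ⊕ Fin (Ldim φf)) × K),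
    FeasibleAug b n φf π' ∧ π'.card = z}

/-- Real restriction of an allocation of `P'`: the triples whose job lies in
`J` (feasibility forces their time to lie in `T`), viewed in `J × T × K`. -/
def restrict {J T K D T' : Type*} [DecidableEq J] [DecidableEq T] [DecidableEq K]
    (π' : Finset ((J ⊕ D) × (T ⊕ T') × K)) : Finset (J × T × K) :=
  π'.filterMap
    (fun x => match x with
      | (Sum.inl j, Sum.inl t, k) => some (j, t, k)
      | _ => none)
    (by rintro ⟨j₁ | d₁, t₁ | l₁, k₁⟩ ⟨j₂ | d₂, t₂ | l₂, k₂⟩ x h₁ h₂ <;>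
          simp_all <;> subst h₁ <;> simp_all)

/-- The embedding of real triples into the triples of `P'`. -/
def embTriple {J T K D T' : Type*} (x : J × T × K) : (J ⊕ D) × (T ⊕ T') × K :=
  (Sum.inl x.1, Sum.inl x.2.1, x.2.2)



private lemma sorted_head!_le {l : List ℕ} (hl : l.Pairwise (· ≤ ·)) {x : ℕ} (hx : x ∈ l) :
    l.head! ≤ x := by
  cases l with
  | nil => simp at hx
  | cons a t =>
    rcases List.mem_cons.1 hx with rfl | hx
    · simp
    · simpa using (List.pairwise_cons.1 hl).1 x hx

private lemma sorted_le_getLast' : ∀ (l : List ℕ), l.Pairwise (· ≤ ·) → ∀ x ∈ l, x ≤ l.getLast! := by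
  intro l
  induction l with
  | nil => intro _ x hx; simp at hx
  | cons a t ih =>
    intro hl x hx
    obtain ⟨h1, h2⟩ := List.pairwise_cons.1 hl
    cases t with
    | nil => simp at hx; simp [hx, List.getLast!]
    | cons b t' =>
      have hgl : (a :: b :: t').getLast! = (b :: t').getLast! := by
        cases t' <;> simp [List.getLast!_cons_eq_getLastD, List.getLastD_cons, List.getLast!, List.getLast?]
      rw [hgl]
      rcases List.mem_cons.1 hx with rfl | hx
      · exact le_trans (h1 b (by simp)) (ih h2 b (by simp))
      · exact ih h2 x hx

private lemma sorted_le_getLast! {l : List ℕ} (hl : l.Pairwise (· ≤ ·)) {x : ℕ} (hx : x ∈ l) :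
    x ≤ l.getLast! := sorted_le_getLast' l hl x hx

private lemma sum_map_sub {M : ℕ} : ∀ (l : List ℕ), (∀ z ∈ l, z ≤ M) →
    (l.map (fun z => M - z)).sum = l.length * M - l.sum ∧ l.sum ≤ l.length * M := by
  intro l
  induction l with
  | nil => simp
  | cons a t ih =>
    intro h
    obtain ⟨h1, h2⟩ := ih (fun z hz => h z (by simp [hz]))
    have ha := h a (by simp)
    simp only [List.map_cons, List.sum_cons, List.length_cons]
    constructor
    · rw [h1]; ring_nf; omega
    · ring_nf; omega

private lemma lex_contradiction {M : ℕ} {ψ φ : List ℕ} (hlex : List.Lex (· < ·) ψ φ) :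
    ψ.length = φ.length → ψ.Pairwise (· ≤ ·) → φ.Pairwise (· ≤ ·) →
    (∀ x ∈ ψ, x ≤ M) → (∀ x ∈ φ, x ≤ M) → ψ.sum = φ.sum →
    (∀ m, (φ.map (fun x => min (M - x) m)).sum ≤ (ψ.map (fun x => min (M - x) m)).sum) →
    False := by
  induction hlex with
  | nil => intro hlen _ _ _ _ _ _; simp at hlen
  | @cons a t₁ t₂ _ ih =>
    intro hlen hs1 hs2 hb1 hb2 hsum hineq
    exact ih (by simpa using hlen) (List.pairwise_cons.1 hs1).2 (List.pairwise_cons.1 hs2).2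
      (fun x hx => hb1 x (by simp [hx])) (fun x hx => hb2 x (by simp [hx]))
      (by simp only [List.sum_cons] at hsum; omega)
      (fun m => by
        have := hineq m
        simp only [List.map_cons, List.sum_cons] at this
        omega)
  | @rel x t₁ y t₂ hxy =>
    intro hlen hs1 hs2 hb1 hb2 hsum hineq
    have hyM : y ≤ M := hb2 y (by simp)
    have hlen' : t₁.length = t₂.length := by simpa using hlen
    set m := M - y with hm
    have h2 : (t₂.map (fun z => min (M - z) m)).sum = (t₂.map (fun z => M - z)).sum := by
      congr 1
      exact List.map_congr_left (fun z hz => by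
        have : y ≤ z := (List.pairwise_cons.1 hs2).1 z hz
        omega)
    have h1 : (t₁.map (fun z => min (M - z) m)).sum ≤ (t₁.map (fun z => M - z)).sum :=
      List.sum_le_sum (fun z _ => min_le_left _ _)
    obtain ⟨e1, b1⟩ := sum_map_sub t₁ (fun z hz => hb1 z (by simp [hz]))
    obtain ⟨e2, b2⟩ := sum_map_sub t₂ (fun z hz => hb2 z (by simp [hz]))
    rw [hlen'] at e1 b1
    have hkey := hineq m
    simp only [List.map_cons, List.sum_cons] at hkey
    rw [h2, e2] at hkey
    have hx' : min (M - x) m ≤ m := min_le_right _ _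
    have hsum' : x + t₁.sum = y + t₂.sum := by simpa using hsum
    have hmin : min (M - y) m = m := by omega
    rw [hmin] at hkey
    have := le_trans h1 (le_of_eq e1)
    omega

private lemma countL {M p1 a m : ℕ} (h1 : p1 ≤ a) (h2 : a ≤ M) :
    ((Finset.range (M - p1)).filter (fun l => M - p1 ≤ l + m ∧ a < p1 + l + 1)).card
      = min (M - a) m := by
  have h : ((Finset.range (M - p1)).filter (fun l => M - p1 ≤ l + m ∧ a < p1 + l + 1))
      = Finset.Ico (M - p1 - min (M - a) m) (M - p1) := by
    ext l
    simp only [Finset.mem_filter, Finset.mem_range, Finset.mem_Ico]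
    omega
  rw [h, Nat.card_Ico]
  omega

private lemma cardSm {L m : ℕ} : ((Finset.range L).filter (fun l => L ≤ l + m)).card ≤ m := by
  have h : (Finset.range L).filter (fun l => L ≤ l + m) = Finset.Ico (L - m) L := by
    ext l
    simp only [Finset.mem_filter, Finset.mem_range, Finset.mem_Ico]
    omega
  rw [h, Nat.card_Ico]
  omega

private lemma feas_job_unique {J T K : Type*} [DecidableEq J] [DecidableEq T] [DecidableEq K]
    {b : J → T → K → Prop} {n : K → T → ℕ} {π : Finset (J × T × K)} (h : Feasible b n π) :
    ∀ x ∈ π, ∀ y ∈ π, x.1 = y.1 → x = y := by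
  intro x hx y hy hxy
  exact Finset.card_le_one.1 (h.2.1 x.1) x (Finset.mem_filter.2 ⟨hx, rfl⟩) y
    (Finset.mem_filter.2 ⟨hy, hxy.symm⟩)

private lemma card_eq_sum_alloc {J T K : Type*} [Fintype K] [DecidableEq K]
    (π : Finset (J × T × K)) : π.card = ∑ k : K, alloc π k :=
  Finset.card_eq_sum_card_fiberwise (fun x _ => Finset.mem_univ x.2.2)

private lemma sortedVec_coe {J T K : Type*} [Fintype K] [DecidableEq J] [DecidableEq T]
    [DecidableEq K] (π : Finset (J × T × K)) :
    (↑(sortedVec π) : Multiset ℕ) = Finset.univ.val.map (fun k => alloc π k) :=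
  Multiset.sort_eq _ _

private lemma sortedVec_sorted {J T K : Type*} [Fintype K] [DecidableEq J] [DecidableEq T]
    [DecidableEq K] (π : Finset (J × T × K)) : (sortedVec π).Pairwise (· ≤ ·) :=
  Multiset.pairwise_sort _ _

private lemma sortedVec_length {J T K : Type*} [Fintype K] [DecidableEq J] [DecidableEq T]
    [DecidableEq K] (π : Finset (J × T × K)) : (sortedVec π).length = Fintype.card K := by
  rw [sortedVec, Multiset.length_sort, Multiset.card_map]
  rfl

private lemma sum_map_sortedVec {J T K : Type*} [Fintype K] [DecidableEq J] [DecidableEq T]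
    [DecidableEq K] (π : Finset (J × T × K)) (g : ℕ → ℕ) :
    ((sortedVec π).map g).sum = ∑ k : K, g (alloc π k) := by
  rw [← Multiset.sum_coe, ← Multiset.map_coe, sortedVec_coe, Multiset.map_map,
    Finset.sum_eq_multiset_sum]
  rfl

private lemma mem_sortedVec {J T K : Type*} [Fintype K] [DecidableEq J] [DecidableEq T]
    [DecidableEq K] (π : Finset (J × T × K)) (k : K) : alloc π k ∈ sortedVec π := by
  rw [← Multiset.mem_coe, sortedVec_coe]
  exact Multiset.mem_map_of_mem _ (Finset.mem_univ k)

private def tIdx {T : Type*} {Ld : ℕ} : T ⊕ Fin Ld → ℕ := Sum.elim (fun _ => Ld) Fin.val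

private lemma embTriple_inj {J T K D T' : Type*} :
    Function.Injective (embTriple (J := J) (T := T) (K := K) (D := D) (T' := T')) := by
  rintro ⟨j, t, k⟩ ⟨j', t', k'⟩ h
  simp only [embTriple, Prod.mk.injEq, Sum.inl.injEq] at h
  simp [Prod.ext_iff, h.1, h.2.1, h.2.2]

private lemma mem_restrict {J T K D T' : Type*} [DecidableEq J] [DecidableEq T] [DecidableEq K]
    (π' : Finset ((J ⊕ D) × (T ⊕ T') × K)) (j : J) (t : T) (k : K) :
    (j, t, k) ∈ restrict π' ↔ (Sum.inl j, Sum.inl t, k) ∈ π' := by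
  constructor
  · intro h
    obtain ⟨x, hx, he⟩ := (Finset.mem_filterMap _).1 h
    obtain ⟨j' | d, t' | l, k'⟩ := x <;> simp_all
  · intro h
    exact (Finset.mem_filterMap _).2 ⟨_, h, rfl⟩

private lemma layerSize_eq {K : Type*} [Fintype K] [DecidableEq K] (φf : List ℕ) (f : K → ℕ)
    (hf : Finset.univ.val.map f = (↑φf : Multiset ℕ)) (l : ℕ) :
    layerSize φf l = (Finset.univ.filter (fun k => f k < φf.head! + l + 1)).card := by
  rw [layerSize, ← List.countP_eq_length_filter, ← Multiset.coe_countP, ← hf,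
    Multiset.countP_map]
  rfl

private lemma ident {K : Type*} [Fintype K] [DecidableEq K] (φf : List ℕ)
    (hs : φf.Pairwise (· ≤ ·)) (f : K → ℕ)
    (hf : Finset.univ.val.map f = (↑φf : Multiset ℕ)) (m : ℕ) :
    ∑ l ∈ Finset.range (Ldim φf), (if Ldim φf ≤ l + m then layerSize φf l else 0)
      = ∑ k : K, min (φf.getLast! - f k) m := by
  have hmem : ∀ k, f k ∈ φf := fun k => by
    rw [← Multiset.mem_coe, ← hf]
    exact Multiset.mem_map_of_mem _ (Finset.mem_univ k)
  calc ∑ l ∈ Finset.range (Ldim φf), (if Ldim φf ≤ l + m then layerSize φf l else 0)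
      = ∑ l ∈ Finset.range (Ldim φf), ∑ k : K,
          (if Ldim φf ≤ l + m ∧ f k < φf.head! + l + 1 then 1 else 0) := by
        refine Finset.sum_congr rfl fun l _ => ?_
        rw [layerSize_eq φf f hf l, Finset.card_filter]
        split_ifs with h
        · exact Finset.sum_congr rfl fun k _ => by simp [h]
        · exact (Finset.sum_eq_zero fun k _ => by simp [h]).symm
    _ = ∑ k : K, ∑ l ∈ Finset.range (Ldim φf),
          (if Ldim φf ≤ l + m ∧ f k < φf.head! + l + 1 then 1 else 0) := Finset.sum_comm
    _ = ∑ k : K, ((Finset.range (Ldim φf)).filter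
          (fun l => Ldim φf ≤ l + m ∧ f k < φf.head! + l + 1)).card := by
        exact Finset.sum_congr rfl fun k _ => (Finset.card_filter _ _).symm
    _ = ∑ k : K, min (φf.getLast! - f k) m := by
        refine Finset.sum_congr rfl fun k _ => ?_
        have h1 : φf.head! ≤ f k := sorted_head!_le hs (hmem k)
        have h2 : f k ≤ φf.getLast! := sorted_le_getLast! hs (hmem k)
        exact countL h1 h2

private lemma extend_dir {J T K : Type*} [Fintype K] [DecidableEq J] [DecidableEq T]
    [DecidableEq K] (b : J → T → K → Prop) (c : J → T → K → ℕ) (n : K → T → ℕ)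
    (φf : List ℕ) (π : Finset (J × T × K))
    (hfeas : Feasible b n π) (hsv : sortedVec π = φf) :
    ∃ π' : Finset ((J ⊕ Dummy φf) × (T ⊕ Fin (Ldim φf)) × K),
      FeasibleAug b n φf π' ∧ π'.card = Fintype.card K * φf.getLast! ∧
        cost (costAug c φf) π' = cost c π := by
  classical
  have hsφ : φf.Pairwise (· ≤ ·) := hsv ▸ sortedVec_sorted π
  have hms : Finset.univ.val.map (fun k => alloc π k) = (↑φf : Multiset ℕ) := by
    rw [← hsv]; exact (sortedVec_coe π).symm
  have hmem : ∀ k, alloc π k ∈ φf := fun k => by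
    rw [← Multiset.mem_coe, ← hms]; exact Multiset.mem_map_of_mem _ (Finset.mem_univ k)
  have hbd : ∀ k, φf.head! ≤ alloc π k ∧ alloc π k ≤ φf.getLast! :=
    fun k => ⟨sorted_head!_le hsφ (hmem k), sorted_le_getLast! hsφ (hmem k)⟩
  set F : ℕ → Finset K := fun l => Finset.univ.filter
    (fun k => alloc π k < φf.head! + l + 1) with hFdef
  have hFcard : ∀ l, (F l).card = layerSize φf l := fun l => (layerSize_eq φf _ hms l).symm
  -- the assignment of dummy jobs to companies
  have he : ∃ e : (l : Fin (Ldim φf)) → Fin (layerSize φf l.1) → K,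
      (∀ l i, e l i ∈ F l.1) ∧ (∀ l i i', e l i = e l i' → i = i') ∧
      (∀ l k, k ∈ F l.1 → ∃ i, e l i = k) := by
    refine ⟨fun l i => ((F l.1).equivFin.symm ⟨i.1, by rw [hFcard]; exact i.2⟩ : {x // x ∈ F l.1}).1,
      fun l i => ((F l.1).equivFin.symm _).2, ?_, ?_⟩
    · intro l i i' h
      have h2 := (F l.1).equivFin.symm.injective (Subtype.ext h)
      have h3 : i.1 = i'.1 := by
        have := congrArg Fin.val h2
        simpa using this
      exact Fin.ext h3
    · intro l k hk
      refine ⟨⟨((F l.1).equivFin ⟨k, hk⟩).1, by rw [← hFcard l.1]; exact ((F l.1).equivFin ⟨k, hk⟩).2⟩, ?_⟩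
      have h3 : (⟨((F l.1).equivFin ⟨k, hk⟩).1, by exact ((F l.1).equivFin ⟨k, hk⟩).2⟩ :
          Fin (F l.1).card) = (F l.1).equivFin ⟨k, hk⟩ := Fin.ext rfl
      show ((F l.1).equivFin.symm _ : {x // x ∈ F l.1}).1 = k
      rw [h3, Equiv.symm_apply_apply]
  obtain ⟨e, he_mem, he_inj, he_surj⟩ := he
  set Fd : Dummy φf → (J ⊕ Dummy φf) × (T ⊕ Fin (Ldim φf)) × K :=
    fun d => (Sum.inr d, Sum.inr d.1, e d.1 d.2) with hFddef
  have hFdinj : Function.Injective Fd := by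
    intro d d' h
    have := congrArg Prod.fst h
    simpa [hFddef] using this
  set π' := π.image embTriple ∪ Finset.univ.image Fd with hπ'def
  have hdisj : Disjoint (π.image embTriple) (Finset.univ.image Fd) := by
    rw [Finset.disjoint_left]
    rintro x hx hx'
    obtain ⟨y, _, rfl⟩ := Finset.mem_image.1 hx
    obtain ⟨d, _, he2⟩ := Finset.mem_image.1 hx'
    have := congrArg Prod.fst he2
    simp [hFddef, embTriple] at this
  have hmem' : ∀ x, x ∈ π' ↔ (∃ y ∈ π, embTriple y = x) ∨ ∃ d : Dummy φf, Fd d = x := by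
    intro x
    simp [hπ'def, Finset.mem_union, Finset.mem_image]
  have halloc : ∀ k, alloc π' k = φf.getLast! := by
    intro k
    have hsplit : alloc π' k = alloc π k
        + ((Finset.univ : Finset (Dummy φf)).filter (fun d => e d.1 d.2 = k)).card := by
      rw [alloc, hπ'def, Finset.filter_union,
        Finset.card_union_of_disjoint (Finset.disjoint_filter_filter hdisj),
        Finset.filter_image, Finset.filter_image,
        Finset.card_image_of_injective _ embTriple_inj,
        Finset.card_image_of_injective _ hFdinj]
      exact congrArg₂ (· + ·) (congrArg Finset.card (Finset.filter_congr fun x _ => Iff.rfl))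
        (congrArg Finset.card (Finset.filter_congr fun x _ => Iff.rfl))
    have hdcard : ((Finset.univ : Finset (Dummy φf)).filter (fun d => e d.1 d.2 = k)).card
        = ((Finset.univ : Finset (Fin (Ldim φf))).filter (fun l => k ∈ F l.1)).card := by
      refine Finset.card_bij (fun d _ => d.1) ?_ ?_ ?_
      · intro d hd
        rw [Finset.mem_filter] at hd ⊢
        exact ⟨Finset.mem_univ _, hd.2 ▸ he_mem d.1 d.2⟩
      · rintro ⟨l, i⟩ hd ⟨l', i'⟩ hd' (h : l = l')
        subst h
        rw [Finset.mem_filter] at hd hd'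
        have h2 := he_inj l i i' (hd.2.trans hd'.2.symm)
        subst h2
        rfl
      · intro l hl
        rw [Finset.mem_filter] at hl
        obtain ⟨i, hi⟩ := he_surj l k hl.2
        exact ⟨⟨l, i⟩, Finset.mem_filter.2 ⟨Finset.mem_univ _, hi⟩, rfl⟩
    have hfin : ((Finset.univ : Finset (Fin (Ldim φf))).filter (fun l => k ∈ F l.1)).card
        = ((Finset.range (Ldim φf)).filter
            (fun l => Ldim φf ≤ l + Ldim φf ∧ alloc π k < φf.head! + l + 1)).card := by
      rw [Finset.card_filter, Finset.card_filter,
        Fin.sum_univ_eq_sum_range (fun l => if k ∈ F l then 1 else 0)]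
      refine Finset.sum_congr rfl fun l hl => ?_
      rw [Finset.mem_range] at hl
      have : k ∈ F l ↔ alloc π k < φf.head! + l + 1 := by simp [hFdef]
      simp only [this]
      have htriv : Ldim φf ≤ l + Ldim φf := Nat.le_add_left _ _
      simp [htriv]
    have hcl := countL (M := φf.getLast!) (m := Ldim φf) (hbd k).1 (hbd k).2
    rw [show φf.getLast! - φf.head! = Ldim φf from rfl] at hcl
    rw [hsplit, hdcard, hfin, hcl]
    have hb5 := hbd k
    have h5 : Ldim φf = φf.getLast! - φf.head! := rfl
    omega
  have hcard' : π'.card = Fintype.card K * φf.getLast! := by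
    rw [card_eq_sum_alloc π', Finset.sum_congr rfl (fun k _ => halloc k), Finset.sum_const,
      Finset.card_univ, smul_eq_mul]
  have hcost : cost (costAug c φf) π' = cost c π := by
    rw [cost, cost, hπ'def, Finset.sum_union hdisj,
      Finset.sum_image (fun x _ y _ h => embTriple_inj h)]
    have h0 : ∑ x ∈ Finset.univ.image Fd, costAug c φf x.1 x.2.1 x.2.2 = 0 := by
      refine Finset.sum_eq_zero fun x hx => ?_
      obtain ⟨d, _, rfl⟩ := Finset.mem_image.1 hx
      rfl
    rw [h0, add_zero]
    exact Finset.sum_congr rfl fun x _ => rfl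
  refine ⟨π', ⟨⟨?_, ?_, ?_⟩, fun k => le_of_eq (halloc k)⟩, hcard', hcost⟩
  · intro x hx
    rcases (hmem' x).1 hx with ⟨y, hy, rfl⟩ | ⟨d, rfl⟩
    · exact hfeas.1 y hy
    · exact rfl
  · intro jd
    rw [hπ'def, Finset.filter_union]
    refine le_trans (Finset.card_union_le _ _) ?_
    rcases jd with j | d
    · have h2 : (Finset.univ.image Fd).filter (fun x => x.1 = Sum.inl j) = ∅ := by
        rw [Finset.filter_eq_empty_iff]
        rintro x hx
        obtain ⟨d, _, rfl⟩ := Finset.mem_image.1 hx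
        simp [hFddef]
      rw [h2]
      simp only [Finset.card_empty, add_zero]
      rw [Finset.filter_image]
      refine le_trans Finset.card_image_le ?_
      have h3 : π.filter (fun a =>
            (embTriple a : (J ⊕ Dummy φf) × (T ⊕ Fin (Ldim φf)) × K).1 = Sum.inl j)
          = π.filter (fun a => a.1 = j) := by
        refine Finset.filter_congr fun x _ => ?_
        simp [embTriple]
      rw [h3]
      exact hfeas.2.1 j
    · have h2 : ((π.image embTriple : Finset ((J ⊕ Dummy φf) × (T ⊕ Fin (Ldim φf)) × K))).filter (fun x => x.1 = Sum.inr d) = ∅ := by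
        rw [Finset.filter_eq_empty_iff]
        rintro x hx
        obtain ⟨y, _, rfl⟩ := Finset.mem_image.1 hx
        simp [embTriple]
      rw [h2]
      simp only [Finset.card_empty, zero_add]
      rw [Finset.filter_image]
      refine le_trans Finset.card_image_le ?_
      refine le_trans (Finset.card_le_card (t := {d}) ?_) (by simp)
      intro d' hd'
      rw [Finset.mem_filter] at hd'
      have h4 : d' = d := by simpa [hFddef] using hd'.2
      simp [h4]
  · intro k t
    rw [hπ'def, Finset.filter_union]
    refine le_trans (Finset.card_union_le _ _) ?_
    rcases t with t | l
    · have h2 : (Finset.univ.image Fd).filter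
          (fun x => x.2.1 = Sum.inl t ∧ x.2.2 = k) = ∅ := by
        rw [Finset.filter_eq_empty_iff]
        rintro x hx
        obtain ⟨d, _, rfl⟩ := Finset.mem_image.1 hx
        simp [hFddef]
      rw [h2]
      simp only [Finset.card_empty, add_zero]
      rw [Finset.filter_image]
      refine le_trans Finset.card_image_le ?_
      have h3 : π.filter (fun a =>
            (embTriple a : (J ⊕ Dummy φf) × (T ⊕ Fin (Ldim φf)) × K).2.1 = Sum.inl t
            ∧ (embTriple a : (J ⊕ Dummy φf) × (T ⊕ Fin (Ldim φf)) × K).2.2 = k)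
          = π.filter (fun a => a.2.1 = t ∧ a.2.2 = k) := by
        refine Finset.filter_congr fun x _ => ?_
        simp [embTriple]
      rw [h3]
      exact hfeas.2.2 k t
    · have h2 : ((π.image embTriple : Finset ((J ⊕ Dummy φf) × (T ⊕ Fin (Ldim φf)) × K))).filter (fun x => x.2.1 = Sum.inr l ∧ x.2.2 = k) = ∅ := by
        rw [Finset.filter_eq_empty_iff]
        rintro x hx
        obtain ⟨y, _, rfl⟩ := Finset.mem_image.1 hx
        simp [embTriple]
      rw [h2]
      simp only [Finset.card_empty, zero_add]
      show _ ≤ 1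
      rw [Finset.filter_image]
      refine le_trans Finset.card_image_le ?_
      rw [Finset.card_le_one]
      rintro ⟨l1, i1⟩ h1 ⟨l2, i2⟩ h2'
      rw [Finset.mem_filter] at h1 h2'
      have hl1 : l1 = l := by simpa [hFddef] using h1.2.1
      have hl2 : l2 = l := by simpa [hFddef] using h2'.2.1
      have hl12 : l1 = l2 := hl1.trans hl2.symm
      subst hl12
      have hk1 : e l1 i1 = k := by simpa [hFddef] using h1.2.2
      have hk2 : e l1 i2 = k := by simpa [hFddef] using h2'.2.2
      have h6 := he_inj l1 i1 i2 (hk1.trans hk2.symm)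
      subst h6
      rfl


private lemma restrict_dir {J T K : Type*} [Fintype J] [Fintype T] [Fintype K]
    [DecidableEq J] [DecidableEq T] [DecidableEq K]
    (b : J → T → K → Prop) (c : J → T → K → ℕ) (n : K → T → ℕ)
    (φf : List ℕ) (π₀ : Finset (J × T × K))
    (hfair : MaxLexminFair b n π₀) (hφ : sortedVec π₀ = φf)
    (π' : Finset ((J ⊕ Dummy φf) × (T ⊕ Fin (Ldim φf)) × K))
    (hfe : FeasibleAug b n φf π')
    (hcard : π'.card = Fintype.card K * φf.getLast!) :
    Feasible b n (restrict π') ∧ (restrict π').card = Zmax b n ∧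
      sortedVec (restrict π') = φf ∧ cost c (restrict π') = cost (costAug c φf) π' := by
  classical
  obtain ⟨hfeA, hM'⟩ := hfe
  have hb' := hfeA.1
  have hj' := hfeA.2.1
  have hc' := hfeA.2.2
  obtain ⟨hfe₀, hZ₀, hlex₀⟩ := hfair
  set π := restrict π' with hπdef
  have hsφ : φf.Pairwise (· ≤ ·) := hφ ▸ sortedVec_sorted π₀
  have hms0 : Finset.univ.val.map (fun k => alloc π₀ k) = (↑φf : Multiset ℕ) := by
    rw [← hφ]; exact (sortedVec_coe π₀).symm
  have hmem0 : ∀ k, alloc π₀ k ∈ φf := fun k => by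
    rw [← Multiset.mem_coe, ← hms0]; exact Multiset.mem_map_of_mem _ (Finset.mem_univ k)
  have hbd0 : ∀ k, φf.head! ≤ alloc π₀ k ∧ alloc π₀ k ≤ φf.getLast! :=
    fun k => ⟨sorted_head!_le hsφ (hmem0 k), sorted_le_getLast! hsφ (hmem0 k)⟩
  have hsum0 : ∑ k : K, alloc π₀ k = Zmax b n := by rw [← card_eq_sum_alloc, hZ₀]
  have hmr : ∀ j t k, ((j, t, k) ∈ π) ↔ ((Sum.inl j, Sum.inl t, k) ∈ π') :=
    fun j t k => mem_restrict π' j t k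
  -- the real part of π' is the embedded image of π
  have hreal : π'.filter (fun x => x.1.isLeft) = π.image embTriple := by
    ext x
    rw [Finset.mem_filter, Finset.mem_image]
    constructor
    · rintro ⟨hx, hleft⟩
      obtain ⟨jd, tl, k⟩ := x
      rcases jd with j | d
      · rcases tl with t | l
        · exact ⟨(j, t, k), (hmr j t k).2 hx, rfl⟩
        · exact absurd (hb' _ hx) (fun h => h)
      · simp at hleft
    · rintro ⟨⟨j, t, k'⟩, hy, rfl⟩
      exact ⟨(hmr _ _ _).1 hy, rfl⟩
  -- feasibility of the restriction
  have hfeas : Feasible b n π := by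
    refine ⟨?_, ?_, ?_⟩
    · rintro ⟨j, t, k⟩ hx
      exact hb' _ ((hmr j t k).1 hx)
    · intro j
      refine le_trans (Finset.card_le_card_of_injOn embTriple ?_
        (fun a _ b _ h => embTriple_inj h)) (hj' (Sum.inl j))
      rintro ⟨j', t', k'⟩ hx
      rw [Finset.mem_coe, Finset.mem_filter] at hx ⊢
      obtain ⟨hx1, hx2⟩ := hx
      cases hx2
      exact ⟨(hmr _ _ _).1 hx1, rfl⟩
    · intro k t
      refine le_trans (Finset.card_le_card_of_injOn embTriple ?_
        (fun a _ b _ h => embTriple_inj h)) (hc' k (Sum.inl t))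
      rintro ⟨j', t', k'⟩ hx
      rw [Finset.mem_coe, Finset.mem_filter] at hx ⊢
      obtain ⟨hx1, hx2, hx3⟩ := hx
      cases hx2; cases hx3
      exact ⟨(hmr _ _ _).1 hx1, rfl, rfl⟩
  have halloc_le : ∀ k, alloc π k ≤ alloc π' k := by
    intro k
    refine Finset.card_le_card_of_injOn embTriple ?_ (fun a _ b _ h => embTriple_inj h)
    rintro ⟨j, t, k'⟩ hx
    rw [Finset.mem_coe, Finset.mem_filter] at hx ⊢
    obtain ⟨hx1, hx2⟩ := hx
    cases hx2
    exact ⟨(hmr _ _ _).1 hx1, rfl⟩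
  -- per-layer, per-company dummy counts
  set cc : K → ℕ → ℕ := fun k l =>
    (π'.filter (fun x => tIdx x.2.1 = l ∧ x.2.2 = k)).card with hccdef
  set D : ℕ → ℕ := fun l => (π'.filter (fun x => tIdx x.2.1 = l)).card with hDdef
  have hcc1 : ∀ k, ∀ l < Ldim φf, cc k l ≤ 1 := by
    intro k l hl
    have heq : π'.filter (fun x => tIdx x.2.1 = l ∧ x.2.2 = k)
        = π'.filter (fun x => x.2.1 = Sum.inr ⟨l, hl⟩ ∧ x.2.2 = k) := by
      refine Finset.filter_congr fun x _ => ?_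
      obtain ⟨jd, tl, k'⟩ := x
      rcases tl with t | l'
      · simp only [tIdx, Sum.elim_inl]
        constructor
        · rintro ⟨h1, -⟩; exact absurd h1 (by omega)
        · rintro ⟨h1, -⟩; exact absurd h1 (by simp)
      · simp only [tIdx, Sum.elim_inr]
        constructor
        · rintro ⟨h1, h2⟩
          exact ⟨by rw [Sum.inr.injEq]; exact Fin.ext h1, h2⟩
        · rintro ⟨h1, h2⟩
          rw [Sum.inr.injEq] at h1
          exact ⟨by rw [h1], h2⟩
    calc cc k l = (π'.filter (fun x => x.2.1 = Sum.inr ⟨l, hl⟩ ∧ x.2.2 = k)).card :=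
          congrArg Finset.card heq
      _ ≤ 1 := hc' k (Sum.inr ⟨l, hl⟩)
  have hD : ∀ l : ℕ, D l = ∑ k : K, cc k l := by
    intro l
    simp only [hDdef, hccdef]
    rw [Finset.card_eq_sum_card_fiberwise (f := fun x => x.2.2) (t := Finset.univ)
      (fun x _ => Finset.mem_univ _)]
    refine Finset.sum_congr rfl fun k _ => ?_
    rw [Finset.filter_filter]
  have hallocsplit : ∀ k, alloc π' k = alloc π k + ∑ l ∈ Finset.range (Ldim φf), cc k l := by
    intro k
    have h1 : (π'.filter (fun x => x.2.2 = k)).card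
        = ((π'.filter (fun x => x.2.2 = k)).filter (fun x => x.1.isLeft)).card
          + ((π'.filter (fun x => x.2.2 = k)).filter (fun x => ¬ x.1.isLeft)).card :=
      (Finset.card_filter_add_card_filter_not _).symm
    have h2 : (π'.filter (fun x => x.2.2 = k)).filter (fun x => x.1.isLeft)
        = (π.filter (fun x => x.2.2 = k)).image embTriple := by
      rw [Finset.filter_comm, hreal, Finset.filter_image]
      congr 1
    have h3 : ((π'.filter (fun x => x.2.2 = k)).filter (fun x => ¬ x.1.isLeft)).card
        = ∑ l ∈ Finset.range (Ldim φf), cc k l := by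
      rw [Finset.card_eq_sum_card_fiberwise (f := fun x => tIdx x.2.1)
        (t := Finset.range (Ldim φf)) ?_]
      · refine Finset.sum_congr rfl fun l hl => ?_
        rw [Finset.mem_range] at hl
        simp only [hccdef]
        congr 1
        simp only [Finset.filter_filter]
        refine Finset.filter_congr fun x hx => ?_
        obtain ⟨jd, tl, k'⟩ := x
        constructor
        · rintro ⟨⟨hk, hnl⟩, hti⟩
          exact ⟨hti, hk⟩
        · rintro ⟨hti, hk⟩
          refine ⟨⟨hk, ?_⟩, hti⟩
          rcases jd with j | d
          · exfalso
            rcases tl with t | l'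
            · simp only [tIdx, Sum.elim_inl] at hti; omega
            · exact hb' _ hx
          · simp
      · intro x hx
        rw [Finset.mem_coe, Finset.mem_filter, Finset.mem_filter] at hx
        obtain ⟨⟨hxπ, -⟩, hnl⟩ := hx
        obtain ⟨jd, tl, k'⟩ := x
        rcases jd with j | d
        · simp at hnl
        · rcases tl with t | l'
          · exact absurd (hb' _ hxπ) (fun h => h)
          · simp only [tIdx, Sum.elim_inr, Finset.mem_coe, Finset.mem_range]
            exact l'.2
    show (π'.filter (fun x => x.2.2 = k)).card
      = (π.filter (fun x => x.2.2 = k)).card + ∑ l ∈ Finset.range (Ldim φf), cc k l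
    rw [h1, h2, Finset.card_image_of_injective _ embTriple_inj, h3]
  -- each company receives exactly the max in π'
  have hallocM : ∀ k, alloc π' k = φf.getLast! := by
    have hsum' : ∑ k : K, alloc π' k = ∑ k : K, φf.getLast! := by
      rw [← card_eq_sum_alloc, hcard, Finset.sum_const, Finset.card_univ, smul_eq_mul]
    intro k
    exact (Finset.sum_eq_sum_iff_of_le (fun i _ => hM' i)).1 hsum' k (Finset.mem_univ k)
  -- Zmax facts
  have hbddZ : (Fintype.card (J × T × K)) ∈
      upperBounds {z | ∃ ρ : Finset (J × T × K), Feasible b n ρ ∧ ρ.card = z} := by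
    rintro z ⟨ρ, -, rfl⟩; exact Finset.card_le_univ ρ
  have hcardπ_le : π.card ≤ Zmax b n := le_csSup ⟨_, hbddZ⟩ ⟨π, hfeas, rfl⟩
  have hident0 := ident φf hsφ (fun k => alloc π₀ k) hms0
  have hSs : ∑ l ∈ Finset.range (Ldim φf), layerSize φf l
      = ∑ k : K, (φf.getLast! - alloc π₀ k) := by
    calc ∑ l ∈ Finset.range (Ldim φf), layerSize φf l
        = ∑ l ∈ Finset.range (Ldim φf),
            (if Ldim φf ≤ l + Ldim φf then layerSize φf l else 0) := by
          refine Finset.sum_congr rfl fun l _ => ?_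
          rw [if_pos (Nat.le_add_left _ _)]
      _ = ∑ k : K, min (φf.getLast! - alloc π₀ k) (Ldim φf) := hident0 (Ldim φf)
      _ = ∑ k : K, (φf.getLast! - alloc π₀ k) := by
          refine Finset.sum_congr rfl fun k _ => ?_
          have h5 : Ldim φf = φf.getLast! - φf.head! := rfl
          have := hbd0 k
          omega
  have hZle : Zmax b n ≤ Fintype.card K * φf.getLast! := by
    rw [← hsum0]
    calc ∑ k : K, alloc π₀ k ≤ ∑ k : K, φf.getLast! :=
          Finset.sum_le_sum fun k _ => (hbd0 k).2
      _ = _ := by rw [Finset.sum_const, Finset.card_univ, smul_eq_mul]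
  have hDle : ∀ l ∈ Finset.range (Ldim φf), D l ≤ layerSize φf l := by
    intro l hl'
    rw [Finset.mem_range] at hl'
    have hcardt : ((Finset.univ : Finset (J ⊕ Dummy φf)).filter
        (fun jd => Sum.elim (fun _ => False)
          (fun d : Dummy φf => d.1 = (⟨l, hl'⟩ : Fin (Ldim φf))) jd)).card
        = layerSize φf l := by
      have himg : (Finset.univ : Finset (J ⊕ Dummy φf)).filter
          (fun jd => Sum.elim (fun _ => False)
            (fun d : Dummy φf => d.1 = (⟨l, hl'⟩ : Fin (Ldim φf))) jd)
          = (Finset.univ : Finset (Fin (layerSize φf l))).image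
              (fun i => Sum.inr (⟨⟨l, hl'⟩, i⟩ : Dummy φf)) := by
        ext jd
        rcases jd with j | ⟨l', i⟩
        · simp
        · simp only [Finset.mem_filter, Finset.mem_univ, true_and, Sum.elim_inr,
            Finset.mem_image, Sum.inr.injEq]
          constructor
          · intro h
            subst h
            exact ⟨i, rfl⟩
          · rintro ⟨i', hi⟩
            cases hi
            rfl
      have hinj : Function.Injective
          (fun i : Fin (layerSize φf l) => (Sum.inr (⟨⟨l, hl'⟩, i⟩ : Dummy φf) : J ⊕ Dummy φf)) := by
        intro i j hij
        simp only [Sum.inr.injEq, Sigma.mk.inj_iff, heq_eq_eq, true_and] at hij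
        exact hij
      rw [himg, Finset.card_image_of_injective _ hinj, Finset.card_univ, Fintype.card_fin]
    simp only [hDdef]
    refine le_trans (Finset.card_le_card_of_injOn (fun x => x.1) ?_ ?_) (le_of_eq hcardt)
    · rintro ⟨jd, tl, k⟩ hx
      rw [Finset.mem_coe, Finset.mem_filter] at hx
      obtain ⟨hxπ, hti⟩ := hx
      rcases tl with t | l'
      · exfalso; simp only [tIdx, Sum.elim_inl] at hti; omega
      · rcases jd with j | d
        · exact absurd (hb' _ hxπ) (fun h => h)
        · have hb2 : d.1 = l' := hb' _ hxπ
          simp only [tIdx, Sum.elim_inr] at hti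
          rw [Finset.mem_coe, Finset.mem_filter]
          refine ⟨Finset.mem_univ _, ?_⟩
          show d.1 = ⟨l, hl'⟩
          rw [hb2]
          exact Fin.ext hti
    · intro x hx y hy hxy
      exact feas_job_unique hfeA x (Finset.mem_filter.1 (Finset.mem_coe.1 hx)).1 y
        (Finset.mem_filter.1 (Finset.mem_coe.1 hy)).1 hxy
  have htot : Fintype.card K * φf.getLast! = π.card + ∑ l ∈ Finset.range (Ldim φf), D l := by
    rw [← hcard, card_eq_sum_alloc π']
    calc ∑ k : K, alloc π' k
        = ∑ k : K, (alloc π k + ∑ l ∈ Finset.range (Ldim φf), cc k l) :=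
          Finset.sum_congr rfl fun k _ => hallocsplit k
      _ = (∑ k : K, alloc π k) + ∑ k : K, ∑ l ∈ Finset.range (Ldim φf), cc k l :=
          Finset.sum_add_distrib
      _ = π.card + ∑ l ∈ Finset.range (Ldim φf), ∑ k : K, cc k l := by
          rw [← card_eq_sum_alloc, Finset.sum_comm]
      _ = π.card + ∑ l ∈ Finset.range (Ldim φf), D l := by
          exact congrArg _ (Finset.sum_congr rfl fun l _ => (hD l).symm)
  have hsumD_le : ∑ l ∈ Finset.range (Ldim φf), D l
      ≤ ∑ l ∈ Finset.range (Ldim φf), layerSize φf l := Finset.sum_le_sum hDle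
  have hSsZ : ∑ k : K, (φf.getLast! - alloc π₀ k)
      = Fintype.card K * φf.getLast! - Zmax b n := by
    have h6 : (∑ k : K, (φf.getLast! - alloc π₀ k)) + ∑ k : K, alloc π₀ k
        = ∑ k : K, φf.getLast! := by
      rw [← Finset.sum_add_distrib]
      exact Finset.sum_congr rfl fun k _ => by have := hbd0 k; omega
    have h7 : ∑ _k : K, (φf.getLast! : ℕ) = Fintype.card K * φf.getLast! := by
      rw [Finset.sum_const, Finset.card_univ, smul_eq_mul]
    omega
  have hcardπ : π.card = Zmax b n := by omega
  have hDeq : ∀ l ∈ Finset.range (Ldim φf), D l = layerSize φf l :=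
    (Finset.sum_eq_sum_iff_of_le hDle).1 (by omega)
  -- the per-m inequality
  have hperk : ∀ k m, ∑ l ∈ Finset.range (Ldim φf), (if Ldim φf ≤ l + m then cc k l else 0)
      ≤ min (φf.getLast! - alloc π k) m := by
    intro k m
    have hccsum : ∑ l ∈ Finset.range (Ldim φf), cc k l = φf.getLast! - alloc π k := by
      have h8 := hallocsplit k
      have h9 := hallocM k
      have h10 := halloc_le k
      omega
    refine le_min ?_ ?_
    · calc ∑ l ∈ Finset.range (Ldim φf), (if Ldim φf ≤ l + m then cc k l else 0)
          ≤ ∑ l ∈ Finset.range (Ldim φf), cc k l :=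
            Finset.sum_le_sum fun l _ => by split <;> omega
        _ = _ := hccsum
    · rw [← Finset.sum_filter]
      calc ∑ l ∈ (Finset.range (Ldim φf)).filter (fun l => Ldim φf ≤ l + m), cc k l
          ≤ ∑ _l ∈ (Finset.range (Ldim φf)).filter (fun l => Ldim φf ≤ l + m), 1 := by
            refine Finset.sum_le_sum fun l hl => ?_
            rw [Finset.mem_filter, Finset.mem_range] at hl
            exact hcc1 k l hl.1
        _ = ((Finset.range (Ldim φf)).filter (fun l => Ldim φf ≤ l + m)).card := by
            rw [Finset.sum_const, smul_eq_mul, mul_one]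
        _ ≤ m := cardSm
  have hkey : ∀ m, ∑ k : K, min (φf.getLast! - alloc π₀ k) m
      ≤ ∑ k : K, min (φf.getLast! - alloc π k) m := by
    intro m
    rw [← hident0 m]
    calc ∑ l ∈ Finset.range (Ldim φf), (if Ldim φf ≤ l + m then layerSize φf l else 0)
        = ∑ l ∈ Finset.range (Ldim φf), (if Ldim φf ≤ l + m then D l else 0) := by
          refine Finset.sum_congr rfl fun l hl => ?_
          rw [hDeq l hl]
      _ = ∑ l ∈ Finset.range (Ldim φf), ∑ k : K, (if Ldim φf ≤ l + m then cc k l else 0) := by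
          refine Finset.sum_congr rfl fun l hl => ?_
          split_ifs with h
          · exact hD l
          · simp
      _ = ∑ k : K, ∑ l ∈ Finset.range (Ldim φf), (if Ldim φf ≤ l + m then cc k l else 0) :=
          Finset.sum_comm
      _ ≤ ∑ k : K, min (φf.getLast! - alloc π k) m :=
          Finset.sum_le_sum fun k _ => hperk k m
  -- cost equality
  have hcost : cost c π = cost (costAug c φf) π' := by
    rw [cost, cost]
    rw [← Finset.sum_filter_add_sum_filter_not π' (fun x => x.1.isLeft)
      (fun x => costAug c φf x.1 x.2.1 x.2.2)]
    have h0 : ∑ x ∈ π'.filter (fun x => ¬ x.1.isLeft), costAug c φf x.1 x.2.1 x.2.2 = 0 := by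
      refine Finset.sum_eq_zero fun x hx => ?_
      rw [Finset.mem_filter] at hx
      obtain ⟨jd, tl, k⟩ := x
      rcases jd with j | d
      · simp at hx
      · rfl
    rw [h0, add_zero, hreal, Finset.sum_image (fun x _ y _ h => embTriple_inj h)]
    exact Finset.sum_congr rfl fun x _ => rfl
  -- conclude via max-lexmin fairness
  rcases hlex₀ π hfeas hcardπ with heq | hlt
  · exact ⟨hfeas, hcardπ, by rw [heq, hφ], hcost⟩
  · exfalso
    rw [hφ] at hlt
    refine lex_contradiction (M := φf.getLast!) hlt ?_ (sortedVec_sorted π) hsφ ?_ ?_ ?_ ?_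
    · rw [sortedVec_length, ← hφ, sortedVec_length]
    · intro x hx
      rw [← Multiset.mem_coe, sortedVec_coe] at hx
      obtain ⟨k, -, rfl⟩ := Multiset.mem_map.1 hx
      exact le_trans (halloc_le k) (le_of_eq (hallocM k))
    · exact fun x hx => sorted_le_getLast! hsφ hx
    · have hψ : (sortedVec π).sum = ∑ k : K, alloc π k := by
        simpa using sum_map_sortedVec π id
      have hφs : (sortedVec π₀).sum = ∑ k : K, alloc π₀ k := by
        simpa using sum_map_sortedVec π₀ id
      rw [hφ] at hφs
      rw [hψ, hφs, ← card_eq_sum_alloc, ← card_eq_sum_alloc, hcardπ, hZ₀]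
    · intro m
      have h1 := sum_map_sortedVec π (fun x => min (φf.getLast! - x) m)
      have h2 := sum_map_sortedVec π₀ (fun x => min (φf.getLast! - x) m)
      rw [hφ] at h2
      rw [h1, h2]
      exact hkey m

/-- Lemma 6, value form: the optimal cost of the dummy-augmented
minimum-cost maximum-flow problem `P'` equals the optimal cost of `P`
restricted to maximum allocations whose sorted vector is the max-lexmin
fairness vector `φf`. -/
theorem augmented_min_cost_eq {J T K : Type*}
    [Fintype J] [Fintype T] [Fintype K] [Nonempty J] [Nonempty T] [Nonempty K]
    [DecidableEq J] [DecidableEq T] [DecidableEq K]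
    (b : J → T → K → Prop) (c : J → T → K → ℕ) (n : K → T → ℕ)
    (φf : List ℕ) (hφf : ∃ π₀ : Finset (J × T × K),
      MaxLexminFair b n π₀ ∧ sortedVec π₀ = φf) :
    sInf {z | ∃ π' : Finset ((J ⊕ Dummy φf) × (T ⊕ Fin (Ldim φf)) × K),
        FeasibleAug b n φf π' ∧ π'.card = ZmaxAug b n φf ∧
          cost (costAug c φf) π' = z} =
      sInf {z | ∃ π : Finset (J × T × K),
        Feasible b n π ∧ π.card = Zmax b n ∧ sortedVec π = φf ∧
          cost c π = z} := by
  classical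
  obtain ⟨π₀, hfair, hφ⟩ := hφf
  have hub : ∀ z ∈ {z | ∃ π' : Finset ((J ⊕ Dummy φf) × (T ⊕ Fin (Ldim φf)) × K),
      FeasibleAug b n φf π' ∧ π'.card = z}, z ≤ Fintype.card K * φf.getLast! := by
    rintro z ⟨π', ⟨hfa, hM⟩, rfl⟩
    calc π'.card = ∑ k : K, alloc π' k := card_eq_sum_alloc π'
      _ ≤ ∑ k : K, φf.getLast! := Finset.sum_le_sum fun k _ => hM k
      _ = _ := by rw [Finset.sum_const, Finset.card_univ, smul_eq_mul]
  obtain ⟨π₀', hfa₀', hc₀', hcost₀'⟩ := extend_dir b c n φf π₀ hfair.1 hφ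
  have hZA : ZmaxAug b n φf = Fintype.card K * φf.getLast! :=
    le_antisymm (csSup_le ⟨_, π₀', hfa₀', rfl⟩ hub) (le_csSup ⟨_, hub⟩ ⟨π₀', hfa₀', hc₀'⟩)
  congr 1
  ext z
  simp only [Set.mem_setOf_eq]
  constructor
  · rintro ⟨π', hfa, hcz, rfl⟩
    rw [hZA] at hcz
    obtain ⟨h1, h2, h3, h4⟩ := restrict_dir b c n φf π₀ hfair hφ π' hfa hcz
    exact ⟨restrict π', h1, h2, h3, h4⟩
  · rintro ⟨π, h1, h2, h3, rfl⟩
    obtain ⟨π', hfa, hcz, hcost⟩ := extend_dir b c n φf π h1 h3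
    exact ⟨π', hfa, by rw [hcz, hZA], hcost⟩
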